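/- Let F be a graph and Y ⊆ V(F). Then there is a partition V(F) = V_1 ∪ ... ∪ V_{8Δ(F)} into 8Δ(F) parts such that each part is an independent set in F, any two parts differ in size by at most one, and for any two indices i, j the sets V_i ∩ Y and V_j ∩ Y differ in size by at most one. -/

import Mathlib

open Finset

set_option linter.unusedSectionVars false

namespace EqCol

section L1
variable {W : Type*} [Fintype W] [DecidableEq W] {k Δ : ℕ}
variable (G : SimpleGraph W) [DecidableRel G.Adj] (L : W → Finset (Fin k)) (tgt : Fin k → ℕ)

/-- color classes -/
def cls (g : W → Fin k) (i : Fin k) : Finset W := univ.filter (fun v => g v = i)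

lemma mem_cls {g : W → Fin k} {v : W} {i : Fin k} : v ∈ cls g i ↔ g v = i := by
  simp [cls]

def Valid (g : W → Fin k) : Prop :=
  (∀ u v, G.Adj u v → g u ≠ g v) ∧ ∀ v, g v ∉ L v

def Phi (g : W → Fin k) : ℤ := ∑ i, (((cls g i).card : ℤ) - tgt i)^2

def Blocked (g : W → Fin k) (v : W) (i : Fin k) : Prop :=
  (∃ u ∈ cls g i, G.Adj v u) ∨ i ∈ L v

instance (g : W → Fin k) (v : W) (i : Fin k) : Decidable (Blocked G L g v i) := by
  unfold Blocked; infer_instance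

lemma sum_card_cls (g : W → Fin k) : ∑ i, (cls g i).card = Fintype.card W := by
  classical
  rw [← Finset.card_univ]
  rw [← Finset.card_biUnion]
  · congr 1
    ext v
    simp [cls]
  · intro i _ j _ hij
    simp only [Finset.disjoint_left, mem_cls]
    intro a ha hb
    exact hij (ha.symm.trans hb)

lemma cls_update_ne (g : W → Fin k) (x : W) (c i : Fin k) (hic : i ≠ c) :
    cls (Function.update g x c) i = (cls g i).erase x := by
  ext v
  by_cases hv : v = x
  · subst hv; simp [mem_cls, Function.update_self, hic.symm]
  · simp [mem_cls, Function.update_of_ne hv, hv]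

lemma cls_update_self (g : W → Fin k) (x : W) (c : Fin k) :
    cls (Function.update g x c) c = insert x ((cls g c).erase x) := by
  ext v
  by_cases hv : v = x
  · subst hv; simp [mem_cls, Function.update_self]
  · simp [mem_cls, Function.update_of_ne hv, hv]

lemma card_cls_update_orig (g : W → Fin k) (x : W) (c : Fin k) (hc : g x ≠ c) :
    (cls (Function.update g x c) (g x)).card = (cls g (g x)).card - 1 := by
  rw [cls_update_ne g x c _ hc, Finset.card_erase_of_mem (mem_cls.2 rfl)]

lemma card_cls_update_new (g : W → Fin k) (x : W) (c : Fin k) (hc : g x ≠ c) :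
    (cls (Function.update g x c) c).card = (cls g c).card + 1 := by
  rw [cls_update_self]
  have hx : x ∉ cls g c := fun h => hc (mem_cls.1 h)
  rw [Finset.erase_eq_of_notMem hx, Finset.card_insert_of_notMem hx]

lemma card_cls_update_other (g : W → Fin k) (x : W) (c i : Fin k) (hia : i ≠ g x) (hic : i ≠ c) :
    (cls (Function.update g x c) i).card = (cls g i).card := by
  rw [cls_update_ne g x c _ hic]
  have hx : x ∉ cls g i := fun h => hia (mem_cls.1 h).symm
  rw [Finset.erase_eq_of_notMem hx]

lemma valid_update {g : W → Fin k} (hg : Valid G L g) {x : W} {c : Fin k}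
    (hb : ¬ Blocked G L g x c) : Valid G L (Function.update g x c) := by
  have hnb1 : ∀ u, G.Adj x u → g u ≠ c := by
    intro u hadj h
    exact hb (Or.inl ⟨u, mem_cls.2 h, hadj⟩)
  constructor
  · intro u v huv h
    by_cases hu : u = x <;> by_cases hv : v = x
    · exact G.irrefl (hu ▸ hv ▸ huv)
    · rw [hu] at huv h
      rw [Function.update_self, Function.update_of_ne hv] at h
      exact hnb1 v huv h.symm
    · rw [hv] at huv h
      rw [Function.update_self, Function.update_of_ne hu] at h
      exact hnb1 u (G.adj_symm huv) h
    · rw [Function.update_of_ne hu, Function.update_of_ne hv] at h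
      exact hg.1 u v huv h
  · intro v
    by_cases hv : v = x
    · rw [hv, Function.update_self]
      exact fun h => hb (Or.inr h)
    · rw [Function.update_of_ne hv]
      exact hg.2 v

/-- change of Phi under a single move -/
lemma phi_update (g : W → Fin k) (x : W) (c : Fin k) (hc : g x ≠ c) :
    Phi tgt (Function.update g x c) =
      Phi tgt g - 2*(((cls g (g x)).card : ℤ) - tgt (g x)) + 2*(((cls g c).card : ℤ) - tgt c) + 2 := by
  classical
  set a := g x with ha
  have hxa : x ∈ cls g a := mem_cls.2 rfl
  have hcard : 1 ≤ (cls g a).card := Finset.card_pos.2 ⟨x, hxa⟩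
  set f : Fin k → ℤ := fun i => (((cls g i).card : ℤ) - tgt i)^2 with hf
  set f' : Fin k → ℤ := fun i => (((cls (Function.update g x c) i).card : ℤ) - tgt i)^2 with hf'
  have hdiff : ∀ i, i ≠ a → i ≠ c → f' i = f i := by
    intro i h1 h2
    simp only [hf, hf', card_cls_update_other g x c i h1 h2]
  have hsplit : Phi tgt (Function.update g x c) - Phi tgt g = (f' a - f a) + (f' c - f c) := by
    have : Phi tgt (Function.update g x c) - Phi tgt g = ∑ i, (f' i - f i) := by
      rw [Phi, Phi, ← Finset.sum_sub_distrib]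
    rw [this]
    rw [← Finset.sum_subset (Finset.subset_univ ({a, c} : Finset (Fin k)))]
    · rw [Finset.sum_pair hc]
    · intro i _ hi
      simp only [Finset.mem_insert, Finset.mem_singleton, not_or] at hi
      rw [hdiff i hi.1 hi.2]; ring
  have h1 : f' a - f a = -2*(((cls g a).card : ℤ) - tgt a) + 1 := by
    have hco := card_cls_update_orig g x c hc
    rw [← ha] at hco
    simp only [hf, hf', hco]
    have : ((((cls g a).card : ℕ) - 1 : ℕ) : ℤ) = ((cls g a).card : ℤ) - 1 := by
      omega
    rw [this]; ring
  have h2 : f' c - f c = 2*(((cls g c).card : ℤ) - tgt c) + 1 := by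
    simp only [hf, hf', card_cls_update_new g x c hc]
    push_cast
    ring
  have := hsplit
  rw [h1, h2] at this
  linarith

/-- budget: a vertex can be blocked only from few classes (with sets shrunk by one elt) -/
lemma budget {g : W → Fin k} (w : W) (P : Finset (Fin k))
    (hP : ∀ i ∈ P, (∃ u, g u = i ∧ G.Adj w u) ∨ i ∈ L w) :
    P.card ≤ G.degree w + (L w).card := by
  classical
  have hsub : P ⊆ (G.neighborFinset w).image g ∪ L w := by
    intro i hi
    rcases hP i hi with ⟨u, hu, hadj⟩ | h
    · exact Finset.mem_union_left _ (Finset.mem_image.2 ⟨u, by simpa using hadj, hu⟩)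
    · exact Finset.mem_union_right _ h
  calc P.card ≤ ((G.neighborFinset w).image g ∪ L w).card := Finset.card_le_card hsub
    _ ≤ ((G.neighborFinset w).image g).card + (L w).card := Finset.card_union_le _ _
    _ ≤ G.degree w + (L w).card := by
        exact Nat.add_le_add_right (le_trans (Finset.card_image_le) (le_of_eq (G.card_neighborFinset_eq_degree w))) _

/-- capacity: few vertices are blocked by a given class -/
lemma capacity {g : W → Fin k} (i : Fin k) {B : ℕ}
    (hdeg : ∀ v, G.degree v + (L v).card ≤ Δ)
    (hβ : (univ.filter (fun v => i ∈ L v)).card ≤ B) :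
    (univ.filter (fun v => Blocked G L g v i)).card ≤ Δ * (cls g i).card + B := by
  classical
  have hsub : univ.filter (fun v => Blocked G L g v i) ⊆
      (cls g i).biUnion (fun u => G.neighborFinset u) ∪ univ.filter (fun v => i ∈ L v) := by
    intro v hv
    rcases (Finset.mem_filter.1 hv).2 with ⟨u, hu, hadj⟩ | h
    · exact Finset.mem_union_left _ (Finset.mem_biUnion.2 ⟨u, hu, by simpa using G.adj_symm hadj⟩)
    · exact Finset.mem_union_right _ (Finset.mem_filter.2 ⟨Finset.mem_univ v, h⟩)
  calc (univ.filter (fun v => Blocked G L g v i)).card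
      ≤ ((cls g i).biUnion (fun u => G.neighborFinset u)).card + (univ.filter (fun v => i ∈ L v)).card := 
        le_trans (Finset.card_le_card hsub) (Finset.card_union_le _ _)
    _ ≤ Δ * (cls g i).card + B := by
        have h1 : ((cls g i).biUnion (fun u => G.neighborFinset u)).card ≤ Δ * (cls g i).card := by
          calc ((cls g i).biUnion (fun u => G.neighborFinset u)).card 
              ≤ ∑ u ∈ cls g i, (G.neighborFinset u).card := Finset.card_biUnion_le
            _ ≤ ∑ _u ∈ cls g i, Δ := by
                apply Finset.sum_le_sum
                intro u _
                rw [G.card_neighborFinset_eq_degree]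
                exact le_trans (Nat.le_add_right _ _) (hdeg u)
            _ = (cls g i).card * Δ := by rw [Finset.sum_const, smul_eq_mul]
            _ = Δ * (cls g i).card := Nat.mul_comm _ _
        exact Nat.add_le_add h1 hβ

/-- greedy: a valid coloring exists -/
lemma exists_valid (hk : Δ < k) (hdeg : ∀ v, G.degree v + (L v).card ≤ Δ) :
    ∃ g : W → Fin k, Valid G L g := by
  classical
  have hk0 : 0 < k := lt_of_le_of_lt (Nat.zero_le _) hk
  suffices h : ∀ s : Finset W, ∃ g : W → Fin k,
      (∀ u ∈ s, ∀ v ∈ s, G.Adj u v → g u ≠ g v) ∧ (∀ v ∈ s, g v ∉ L v) by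
    obtain ⟨g, h1, h2⟩ := h univ
    exact ⟨g, ⟨fun u v huv => h1 u (mem_univ u) v (mem_univ v) huv, fun v => h2 v (mem_univ v)⟩⟩
  intro s
  induction s using Finset.induction_on with
  | empty => exact ⟨fun _ => ⟨0, hk0⟩, by simp, by simp⟩
  | @insert a s ha ih =>
    obtain ⟨g, h1, h2⟩ := ih
    set bad : Finset (Fin k) := ((G.neighborFinset a ∩ s).image g) ∪ L a with hbad
    have hbadcard : bad.card < k := by
      calc bad.card ≤ ((G.neighborFinset a ∩ s).image g).card + (L a).card :=
            Finset.card_union_le _ _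
        _ ≤ (G.neighborFinset a).card + (L a).card := by
            exact Nat.add_le_add_right (le_trans Finset.card_image_le
              (Finset.card_le_card Finset.inter_subset_left)) _
        _ ≤ Δ := by rw [G.card_neighborFinset_eq_degree]; exact hdeg a
        _ < k := hk
    have hcompl : (badᶜ : Finset (Fin k)).Nonempty := by
      rw [← Finset.card_pos, Finset.card_compl]
      have : Fintype.card (Fin k) = k := Fintype.card_fin k
      omega
    obtain ⟨c, hc⟩ := hcompl
    rw [Finset.mem_compl] at hc
    have hgc : ∀ v ∈ s, G.Adj a v → g v ≠ c := by
      intro v hv hadj h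
      exact hc (Finset.mem_union_left _ (Finset.mem_image.2
        ⟨v, Finset.mem_inter.2 ⟨by simpa using hadj, hv⟩, h⟩))
    refine ⟨Function.update g a c, ?_, ?_⟩
    · intro u hu v hv huv h
      rcases Finset.mem_insert.1 hu with rfl | hu' <;> rcases Finset.mem_insert.1 hv with rfl | hv'
      · exact G.irrefl huv
      · rw [Function.update_self, Function.update_of_ne (ne_of_mem_of_not_mem hv' ha)] at h
        exact hgc v hv' huv h.symm
      · rw [Function.update_self, Function.update_of_ne (ne_of_mem_of_not_mem hu' ha)] at h
        exact hgc u hu' (G.adj_symm huv) h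
      · rw [Function.update_of_ne (ne_of_mem_of_not_mem hu' ha),
          Function.update_of_ne (ne_of_mem_of_not_mem hv' ha)] at h
        exact h1 u hu' v hv' huv h
    · intro v hv
      rcases Finset.mem_insert.1 hv with rfl | hv'
      · rw [Function.update_self]
        exact fun h => hc (Finset.mem_union_right _ h)
      · rw [Function.update_of_ne (ne_of_mem_of_not_mem hv' ha)]
        exact h2 v hv'

theorem lemma1 {q B : ℕ} (hDelta1 : 1 ≤ Δ) (hk : k = 8*Δ)
    (hdeg : ∀ v, G.degree v + (L v).card ≤ Δ)
    (htl : ∀ i, q ≤ tgt i) (htu : ∀ i, tgt i ≤ q+1)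
    (hsum : ∑ i, tgt i = Fintype.card W)
    (hbeta : ∀ i, (univ.filter (fun v => i ∈ L v)).card ≤ B)
    (hB : B ≤ Δ*(q+1))
    (hq : 1 ≤ q ∨ B = 0 ∨ 4*Δ < Fintype.card W) :
    ∃ g : W → Fin k, Valid G L g ∧ ∀ i, (cls g i).card = tgt i := by
  classical
  have hkD : Δ < k := by omega
  obtain ⟨g₀, hg₀⟩ := exists_valid G L hkD hdeg
  set S : Finset (W → Fin k) := univ.filter (fun g => Valid G L g) with hS
  have hg₀S : g₀ ∈ S := Finset.mem_filter.2 ⟨Finset.mem_univ _, hg₀⟩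
  obtain ⟨g, hgS, hgmin⟩ := Finset.exists_min_image S (Phi tgt) ⟨g₀, hg₀S⟩
  have hgV : Valid G L g := (Finset.mem_filter.1 hgS).2
  set d : Fin k → ℤ := fun i => ((cls g i).card : ℤ) - tgt i with hd
  by_cases hdone : ∀ i, (cls g i).card = tgt i
  · exact ⟨g, hgV, hdone⟩
  exfalso
  push_neg at hdone
  obtain ⟨i₀, hi₀⟩ := hdone
  have hd0 : d i₀ ≠ 0 := by
    simp only [hd]
    intro h
    exact hi₀ (by exact_mod_cast sub_eq_zero.1 h)
  have hsumd : ∑ i, d i = 0 := by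
    have h1 : ∑ i, ((cls g i).card : ℤ) = (Fintype.card W : ℤ) := by
      rw [← Nat.cast_sum, sum_card_cls]
    have h2 : ∑ i, (tgt i : ℤ) = (Fintype.card W : ℤ) := by
      rw [← Nat.cast_sum, hsum]
    simp only [hd]
    rw [Finset.sum_sub_distrib, h1, h2, sub_self]
  -- the key minimality fact
  have hblock : ∀ g' : W → Fin k, Valid G L g' → Phi tgt g' = Phi tgt g → ∀ x c, g' x ≠ c →
      (((cls g' c).card:ℤ) - tgt c) + 2 ≤ (((cls g' (g' x)).card:ℤ) - tgt (g' x)) →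
      Blocked G L g' x c := by
    intro g' hg'V hg'Phi x c hxc hgap
    by_contra hb
    have hval := valid_update G L hg'V hb
    have hmem : Function.update g' x c ∈ S := Finset.mem_filter.2 ⟨Finset.mem_univ _, hval⟩
    have hphi := phi_update tgt g' x c hxc
    have hmin2 := hgmin _ hmem
    rw [hphi, hg'Phi] at hmin2
    linarith
  -- extremes
  obtain ⟨P, _, hPmax⟩ := Finset.exists_max_image univ d ⟨i₀, mem_univ _⟩
  obtain ⟨C₀, _, hC₀min⟩ := Finset.exists_min_image univ d ⟨i₀, mem_univ _⟩
  have hexneg : ∃ j, d j < 0 := by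
    by_contra hpos
    push_neg at hpos
    have := (Finset.sum_eq_zero_iff_of_nonneg (fun i _ => hpos i)).1 hsumd i₀ (mem_univ _)
    exact hd0 this
  have hexpos : ∃ j, 0 < d j := by
    by_contra hneg
    push_neg at hneg
    have h0 : ∑ i, (-(d i)) = 0 := by rw [Finset.sum_neg_distrib, hsumd, neg_zero]
    have := (Finset.sum_eq_zero_iff_of_nonneg (fun i _ => by
      have := hneg i; linarith)).1 h0 i₀ (mem_univ _)
    exact hd0 (by linarith)
  have hM1 : 1 ≤ d P := by
    obtain ⟨j, hj⟩ := hexpos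
    have := hPmax j (mem_univ _)
    omega
  have hD1 : d C₀ ≤ -1 := by
    obtain ⟨j, hj⟩ := hexneg
    have := hC₀min j (mem_univ _)
    omega
  have hDle : -(d C₀) ≤ (q:ℤ)+1 := by
    have h1 : (0:ℤ) ≤ ((cls g C₀).card : ℤ) := Nat.cast_nonneg _
    have h2 : (tgt C₀ : ℤ) ≤ (q:ℤ)+1 := by exact_mod_cast htu C₀
    simp only [hd] at *
    linarith
  have hcardN : (8*Δ*q : ℤ) ≤ (Fintype.card W : ℤ) := by
    have : k*q ≤ ∑ i, tgt i := by
      calc k*q = ∑ _i : Fin k, q := by rw [Finset.sum_const, Finset.card_univ, Fintype.card_fin, smul_eq_mul]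
        _ ≤ ∑ i, tgt i := Finset.sum_le_sum (fun i _ => htl i)
    rw [hsum] at this
    exact_mod_cast hk ▸ this
  by_cases hcase : 3 ≤ d P + (- d C₀)
  · -- Case A
    set Dz : ℤ := - d C₀ with hDz
    have hDz1 : 1 ≤ Dz := by omega
    set low : Finset (Fin k) := univ.filter (fun i => d i ≤ -(Dz-1)) with hlow
    have hPcard : 0 < (cls g P).card := by
      have h1 : (0:ℤ) ≤ (tgt P : ℤ) := Nat.cast_nonneg _
      have e1 : ((cls g P).card:ℤ) - tgt P = d P := rfl
      have : (0:ℤ) < ((cls g P).card:ℤ) := by linarith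
      exact_mod_cast this
    obtain ⟨w, hw⟩ := Finset.card_pos.1 hPcard
    have hgw : g w = P := mem_cls.1 hw
    have hPnotlow : P ∉ low := by
      simp only [hlow, Finset.mem_filter, Finset.mem_univ, true_and, not_le]
      linarith
    have hC₀low : C₀ ∈ low := by
      simp only [hlow, Finset.mem_filter, Finset.mem_univ, true_and]
      omega
    have hlowblocked : ∀ i ∈ low, Blocked G L g w i := by
      intro i hi
      have hdi : d i ≤ -(Dz-1) := (Finset.mem_filter.1 hi).2
      have hne : g w ≠ i := by
        rw [hgw]; intro h; exact hPnotlow (h ▸ hi)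
      apply hblock g hgV rfl w i hne
      rw [hgw]
      show (((cls g i).card:ℤ) - tgt i) + 2 ≤ ((cls g P).card:ℤ) - tgt P
      have e1 : ((cls g i).card:ℤ) - tgt i = d i := rfl
      have e2 : ((cls g P).card:ℤ) - tgt P = d P := rfl
      rw [e1, e2]; linarith
    have hlowcard : low.card ≤ Δ := by
      refine le_trans (le_trans (budget G L (g := g) w low ?_) ?_) (hdeg w)
      · intro i hi
        rcases hlowblocked i hi with ⟨u, hu, hadj⟩ | h
        · exact Or.inl ⟨u, mem_cls.1 hu, hadj⟩
        · exact Or.inr h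
      · exact le_rfl
    set pool : Finset W := univ.filter (fun v => g v ∉ low) with hpool
    have hpoolblocked : ∀ v ∈ pool, Blocked G L g v C₀ := by
      intro v hv
      have hnl : g v ∉ low := (Finset.mem_filter.1 hv).2
      have hdgv : -(Dz - 1) < d (g v) := by
        by_contra hle
        push_neg at hle
        exact hnl (Finset.mem_filter.2 ⟨Finset.mem_univ _, hle⟩)
      have hne : g v ≠ C₀ := fun h => hnl (h ▸ hC₀low)
      apply hblock g hgV rfl v C₀ hne
      show (((cls g C₀).card:ℤ) - tgt C₀) + 2 ≤ ((cls g (g v)).card:ℤ) - tgt (g v)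
      have e1 : ((cls g C₀).card:ℤ) - tgt C₀ = d C₀ := rfl
      have e2 : ((cls g (g v)).card:ℤ) - tgt (g v) = d (g v) := rfl
      rw [e1, e2]; omega
    have hcap := capacity G L (g := g) C₀ hdeg (hbeta C₀)
    have hpoolcard_le : (pool.card:ℤ) ≤ (Δ:ℤ) * ((cls g C₀).card:ℤ) + B := by
      have hsub : pool ⊆ univ.filter (fun v => Blocked G L g v C₀) :=
        fun v hv => Finset.mem_filter.2 ⟨Finset.mem_univ _, hpoolblocked v hv⟩
      have h := le_trans (Finset.card_le_card hsub) hcap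
      exact_mod_cast h
    have hlowsize : ∀ i ∈ low, ((cls g i).card : ℤ) ≤ (q:ℤ) + 2 - Dz := by
      intro i hi
      have h1 : d i ≤ -(Dz-1) := (Finset.mem_filter.1 hi).2
      have h2 : (tgt i:ℤ) ≤ (q:ℤ)+1 := by exact_mod_cast htu i
      have e1 : ((cls g i).card:ℤ) - tgt i = d i := rfl
      linarith
    have hcomplv : univ.filter (fun v => g v ∈ low) = low.biUnion (cls g) := by
      ext v
      simp only [Finset.mem_filter, Finset.mem_univ, true_and, Finset.mem_biUnion, mem_cls]
      constructor
      · intro h; exact ⟨g v, h, rfl⟩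
      · rintro ⟨i, hi, rfl⟩; exact hi
    have hcomplcard : ((univ.filter (fun v => g v ∈ low)).card : ℤ) ≤ (Δ:ℤ) * ((q:ℤ) + 2 - Dz) := by
      rw [hcomplv]
      calc ((low.biUnion (cls g)).card : ℤ) ≤ ∑ i ∈ low, ((cls g i).card : ℤ) := by
            exact_mod_cast Finset.card_biUnion_le
        _ ≤ ∑ _i ∈ low, ((q:ℤ) + 2 - Dz) := Finset.sum_le_sum hlowsize
        _ = low.card * ((q:ℤ) + 2 - Dz) := by rw [Finset.sum_const, nsmul_eq_mul]
        _ ≤ (Δ:ℤ) * ((q:ℤ) + 2 - Dz) := by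
            have h0 : (0:ℤ) ≤ (q:ℤ) + 2 - Dz := by linarith
            have h1 : (low.card:ℤ) ≤ (Δ:ℤ) := by exact_mod_cast hlowcard
            exact mul_le_mul_of_nonneg_right h1 h0
    have hpoolsplit : (univ.filter (fun v => g v ∈ low)).card + pool.card = Fintype.card W := by
      rw [hpool]
      rw [Finset.card_filter_add_card_filter_not (p := fun v => g v ∈ low)]
      exact Finset.card_univ
    have hclsC₀ : ((cls g C₀).card:ℤ) = (tgt C₀:ℤ) - Dz := by
      have e1 : ((cls g C₀).card:ℤ) - tgt C₀ = d C₀ := rfl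
      omega
    have htgtC₀ : (tgt C₀:ℤ) ≤ (q:ℤ)+1 := by exact_mod_cast htu C₀
    have hBz : (B:ℤ) ≤ (Δ:ℤ) * ((q:ℤ)+1) := by exact_mod_cast hB
    have hDpos : (1:ℤ) ≤ (Δ:ℤ) := by exact_mod_cast hDelta1
    have hNsplit : (Fintype.card W:ℤ) =
        ((univ.filter (fun v => g v ∈ low)).card:ℤ) + (pool.card:ℤ) := by
      exact_mod_cast hpoolsplit.symm
    by_cases hq1 : 1 ≤ q
    · have hq1' : (1:ℤ) ≤ (q:ℤ) := by exact_mod_cast hq1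
      have e1 : (pool.card:ℤ) ≤ (Δ:ℤ)*((q:ℤ)+1-Dz) + B := by
        have h2 : ((cls g C₀).card:ℤ) ≤ (q:ℤ)+1-Dz := by rw [hclsC₀]; linarith
        have h3 := mul_le_mul_of_nonneg_left h2 (show (0:ℤ) ≤ (Δ:ℤ) by linarith)
        linarith
      have hmq : (Δ:ℤ) ≤ (Δ:ℤ)*(q:ℤ) := le_mul_of_one_le_right (by linarith) hq1'
      have hmD : (Δ:ℤ) ≤ (Δ:ℤ)*Dz := le_mul_of_one_le_right (by linarith) hDz1
      have hx1 : (Δ:ℤ)*((q:ℤ)+2-Dz) = (Δ:ℤ)*(q:ℤ) + 2*(Δ:ℤ) - (Δ:ℤ)*Dz := by ring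
      have hx2 : (Δ:ℤ)*((q:ℤ)+1-Dz) = (Δ:ℤ)*(q:ℤ) + (Δ:ℤ) - (Δ:ℤ)*Dz := by ring
      have hx3 : (Δ:ℤ)*((q:ℤ)+1) = (Δ:ℤ)*(q:ℤ) + (Δ:ℤ) := by ring
      have hcardN' : 8*((Δ:ℤ)*(q:ℤ)) ≤ (Fintype.card W : ℤ) := by
        calc 8*((Δ:ℤ)*(q:ℤ)) = (8*Δ*q : ℤ) := by ring
          _ ≤ _ := hcardN
      linarith [hcardN', hcomplcard, e1, hBz, hNsplit, hmq, hmD, hDpos, hx1, hx2, hx3]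
    · have hqz : q = 0 := by omega
      have hqz' : (q:ℤ) = 0 := by exact_mod_cast hqz
      have hDzis1 : Dz = 1 := by omega
      have hcls0 : ((cls g C₀).card:ℤ) = 0 := by
        have h0 : (0:ℤ) ≤ ((cls g C₀).card:ℤ) := Nat.cast_nonneg _
        omega
      rcases hq with hq' | hB0 | hN4
      · omega
      · have hwpool : w ∈ pool := Finset.mem_filter.2 ⟨Finset.mem_univ _, by
          rw [hgw]; exact hPnotlow⟩
        have hppos : 0 < pool.card := Finset.card_pos.2 ⟨w, hwpool⟩
        have hB0' : (B:ℤ) = 0 := by exact_mod_cast hB0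
        rw [hcls0, hB0'] at hpoolcard_le
        have hple : (pool.card:ℤ) ≤ 0 := by
          calc (pool.card:ℤ) ≤ (Δ:ℤ) * 0 + 0 := hpoolcard_le
            _ = 0 := by ring
        have hppos' : (0:ℤ) < (pool.card:ℤ) := by exact_mod_cast hppos
        omega
      · have hN4' : (4*(Δ:ℤ)) < (Fintype.card W:ℤ) := by exact_mod_cast hN4
        rw [hcls0] at hpoolcard_le
        simp only [mul_zero, zero_add] at hpoolcard_le
        rw [hqz'] at hcomplcard hBz
        rw [hDzis1] at hcomplcard
        norm_num at hcomplcard hBz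
        linarith [hpoolcard_le, hcomplcard, hBz, hNsplit, hN4', hDpos]
  · -- Case B : d P = 1, d C₀ = -1
    have hMP : d P = 1 := by omega
    have hMC : d C₀ = -1 := by omega
    have hall : ∀ i, d i = -1 ∨ d i = 0 ∨ d i = 1 := by
      intro i
      have h1 := hPmax i (mem_univ i)
      have h2 := hC₀min i (mem_univ i)
      omega
    set plus : Finset (Fin k) := univ.filter (fun i => d i = 1) with hplus
    set minus : Finset (Fin k) := univ.filter (fun i => d i = -1) with hminus
    set zeroc : Finset (Fin k) := univ.filter (fun i => d i = 0) with hzeroc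
    have hsum2 : ∑ i, d i = (plus.card:ℤ) - (minus.card:ℤ) := by
      have hpt : ∀ i, d i = (if d i = 1 then (1:ℤ) else 0) - (if d i = -1 then (1:ℤ) else 0) := by
        intro i; rcases hall i with h | h | h <;> simp [h]
      rw [Finset.sum_congr rfl (fun i _ => hpt i), Finset.sum_sub_distrib,
        Finset.sum_boole, Finset.sum_boole]
    have hpm : (plus.card:ℤ) = (minus.card:ℤ) := by
      rw [hsum2] at hsumd; linarith
    have hPcard : 0 < (cls g P).card := by
      have e1 : ((cls g P).card:ℤ) - tgt P = d P := rfl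
      have h1 : (0:ℤ) ≤ (tgt P : ℤ) := Nat.cast_nonneg _
      have : (0:ℤ) < ((cls g P).card:ℤ) := by linarith
      exact_mod_cast this
    obtain ⟨w₁, hw₁⟩ := Finset.card_pos.1 hPcard
    have hgw₁ : g w₁ = P := mem_cls.1 hw₁
    have hminusblocked : ∀ i ∈ minus, Blocked G L g w₁ i := by
      intro i hi
      have hdi : d i = -1 := (Finset.mem_filter.1 hi).2
      have hne : g w₁ ≠ i := by
        rw [hgw₁]; intro h; rw [h] at hMP; omega
      apply hblock g hgV rfl w₁ i hne
      rw [hgw₁]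
      show (((cls g i).card:ℤ) - tgt i) + 2 ≤ ((cls g P).card:ℤ) - tgt P
      have e1 : ((cls g i).card:ℤ) - tgt i = d i := rfl
      have e2 : ((cls g P).card:ℤ) - tgt P = d P := rfl
      omega
    have hminuscard : minus.card ≤ Δ := by
      refine le_trans (budget G L (g := g) w₁ minus ?_) (hdeg w₁)
      intro i hi
      rcases hminusblocked i hi with ⟨u, hu, hadj⟩ | h
      · exact Or.inl ⟨u, mem_cls.1 hu, hadj⟩
      · exact Or.inr h
    have hpluscard : plus.card ≤ Δ := by
      have h1 : (plus.card:ℤ) ≤ (Δ:ℤ) := by rw [hpm]; exact_mod_cast hminuscard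
      exact_mod_cast h1
    have hzcard : k ≤ zeroc.card + 2*Δ := by
      have hcover : (univ : Finset (Fin k)) ⊆ plus ∪ minus ∪ zeroc := by
        intro i _
        rcases hall i with h | h | h
        · exact Finset.mem_union_left _ (Finset.mem_union_right _ (Finset.mem_filter.2 ⟨Finset.mem_univ _, h⟩))
        · exact Finset.mem_union_right _ (Finset.mem_filter.2 ⟨Finset.mem_univ _, h⟩)
        · exact Finset.mem_union_left _ (Finset.mem_union_left _ (Finset.mem_filter.2 ⟨Finset.mem_univ _, h⟩))
      have h1 := Finset.card_le_card hcover
      have h2 := Finset.card_union_le (plus ∪ minus) zeroc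
      have h3 := Finset.card_union_le plus minus
      rw [Finset.card_univ, Fintype.card_fin] at h1
      omega
    set P1s : Finset (Fin k) := univ.filter
      (fun i => d i = 0 ∧ ∃ x ∈ cls g i, ¬ Blocked G L g x C₀) with hP1s
    have hC₀ne : ∀ i, d i = 0 → i ≠ C₀ := by
      intro i h hcon; rw [hcon] at h; omega
    have hP1sub : ∀ i ∈ P1s, (∃ u, g u = i ∧ G.Adj w₁ u) ∨ i ∈ L w₁ := by
      intro i hi
      obtain ⟨hdi, x, hx, hnb⟩ := (Finset.mem_filter.1 hi).2
      have hxi : g x = i := mem_cls.1 hx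
      have hxC₀ : g x ≠ C₀ := by rw [hxi]; exact hC₀ne i hdi
      set g' := Function.update g x C₀ with hg'
      have hval' : Valid G L g' := valid_update G L hgV hnb
      have hphi' : Phi tgt g' = Phi tgt g := by
        rw [hg', phi_update tgt g x C₀ hxC₀]
        have e1 : ((cls g (g x)).card:ℤ) - tgt (g x) = d (g x) := rfl
        have e2 : ((cls g C₀).card:ℤ) - tgt C₀ = d C₀ := rfl
        rw [e1, e2, hxi, hdi, hMC]
        ring
      have hw₁x : w₁ ≠ x := by
        intro h
        rw [h] at hgw₁
        have hiP : i = P := hxi.symm.trans hgw₁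
        rw [hiP] at hdi
        omega
      have hg'w₁ : g' w₁ = P := by rw [hg', Function.update_of_ne hw₁x, hgw₁]
      have hPC₀ : P ≠ C₀ := by intro h; rw [h] at hMP; omega
      have hPi : P ≠ i := by intro h; rw [h] at hMP; omega
      have hclsP' : cls g' P = cls g P := by
        rw [hg', cls_update_ne g x C₀ P hPC₀]
        apply Finset.erase_eq_of_notMem
        intro hxP
        exact hPi ((mem_cls.1 hxP).symm.trans hxi)
      have hiC₀ : i ≠ C₀ := hC₀ne i hdi
      have hclsi' : cls g' i = (cls g i).erase x := by
        rw [hg', cls_update_ne g x C₀ i hiC₀]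
      have hcardi' : ((cls g' i).card:ℤ) = ((cls g i).card:ℤ) - 1 := by
        rw [hclsi', Finset.card_erase_of_mem hx]
        have h0 : 0 < (cls g i).card := Finset.card_pos.2 ⟨x, hx⟩
        push_cast [h0]
        omega
      have hgap : (((cls g' i).card:ℤ) - tgt i) + 2 ≤ ((cls g' (g' w₁)).card:ℤ) - tgt (g' w₁) := by
        rw [hg'w₁, hclsP', hcardi']
        have e1 : ((cls g i).card:ℤ) - tgt i = d i := rfl
        have e2 : ((cls g P).card:ℤ) - tgt P = d P := rfl
        omega
      have hBl2 := hblock g' hval' hphi' w₁ i (by rw [hg'w₁]; exact hPi) hgap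
      rcases hBl2 with ⟨u, hu, hadj⟩ | h
      · left
        rw [hclsi'] at hu
        exact ⟨u, mem_cls.1 (Finset.mem_of_mem_erase hu), hadj⟩
      · right; exact h
    have hP1card : P1s.card ≤ Δ := le_trans (budget G L (g := g) w₁ P1s hP1sub) (hdeg w₁)
    set Bl : Finset W := univ.filter (fun v => Blocked G L g v C₀) with hBlset
    have hBlcard : (Bl.card:ℤ) ≤ (Δ:ℤ) * ((cls g C₀).card:ℤ) + B := by
      exact_mod_cast capacity G L (g := g) C₀ hdeg (hbeta C₀)
    have hclsC₀card : ((cls g C₀).card:ℤ) = (tgt C₀:ℤ) - 1 := by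
      have e2 : ((cls g C₀).card:ℤ) - tgt C₀ = d C₀ := rfl
      omega
    set U : Finset W := univ.filter (fun v => d (g v) = 0 ∧ ¬ Blocked G L g v C₀) with hU
    have hUsub : U ⊆ P1s.biUnion (cls g) := by
      intro v hv
      obtain ⟨h0, hnb⟩ := (Finset.mem_filter.1 hv).2
      exact Finset.mem_biUnion.2 ⟨g v, Finset.mem_filter.2 ⟨Finset.mem_univ _, h0, v, mem_cls.2 rfl, hnb⟩, mem_cls.2 rfl⟩
    have hUle : (U.card:ℤ) ≤ (Δ:ℤ) * ((q:ℤ)+1) := by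
      calc (U.card:ℤ) ≤ ((P1s.biUnion (cls g)).card:ℤ) := by
            exact_mod_cast Finset.card_le_card hUsub
        _ ≤ ∑ i ∈ P1s, ((cls g i).card:ℤ) := by exact_mod_cast Finset.card_biUnion_le
        _ ≤ ∑ _i ∈ P1s, ((q:ℤ)+1) := by
            apply Finset.sum_le_sum
            intro i hi
            have hdi : d i = 0 := ((Finset.mem_filter.1 hi).2).1
            have e1 : ((cls g i).card:ℤ) - tgt i = d i := rfl
            have h2 : (tgt i:ℤ) ≤ (q:ℤ)+1 := by exact_mod_cast htu i
            omega
        _ = P1s.card * ((q:ℤ)+1) := by rw [Finset.sum_const, nsmul_eq_mul]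
        _ ≤ (Δ:ℤ) * ((q:ℤ)+1) := by
            have h1 : (P1s.card:ℤ) ≤ (Δ:ℤ) := by exact_mod_cast hP1card
            have h0 : (0:ℤ) ≤ (q:ℤ)+1 := by positivity
            exact mul_le_mul_of_nonneg_right h1 h0
    set Z0 : Finset W := univ.filter (fun v => d (g v) = 0) with hZ0
    have hZsub : Z0 ⊆ U ∪ Bl := by
      intro v hv
      have h0 := (Finset.mem_filter.1 hv).2
      by_cases hb : Blocked G L g v C₀
      · exact Finset.mem_union_right _ (Finset.mem_filter.2 ⟨Finset.mem_univ _, hb⟩)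
      · exact Finset.mem_union_left _ (Finset.mem_filter.2 ⟨Finset.mem_univ _, h0, hb⟩)
    have hZle : Z0.card ≤ U.card + Bl.card :=
      le_trans (Finset.card_le_card hZsub) (Finset.card_union_le _ _)
    have hZ0eq : Z0 = zeroc.biUnion (cls g) := by
      ext v
      simp only [hZ0, hzeroc, Finset.mem_filter, Finset.mem_univ, true_and,
        Finset.mem_biUnion, mem_cls]
      constructor
      · intro h; exact ⟨g v, h, rfl⟩
      · rintro ⟨i, hi, rfl⟩; exact hi
    have hdisjcls : ∀ i ∈ zeroc, ∀ j ∈ zeroc, i ≠ j → Disjoint (cls g i) (cls g j) := by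
      intro i _ j _ hij
      simp only [Finset.disjoint_left, mem_cls]
      intro a ha hb
      exact hij (ha.symm.trans hb)
    have hZ0card : (zeroc.card:ℤ) * (q:ℤ) ≤ (Z0.card:ℤ) := by
      rw [hZ0eq, Finset.card_biUnion hdisjcls]
      push_cast
      calc (zeroc.card:ℤ) * (q:ℤ) = ∑ _i ∈ zeroc, (q:ℤ) := by
            rw [Finset.sum_const, nsmul_eq_mul]
        _ ≤ ∑ i ∈ zeroc, ((cls g i).card:ℤ) := by
            apply Finset.sum_le_sum
            intro i hi
            have hdi : d i = 0 := (Finset.mem_filter.1 hi).2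
            have e1 : ((cls g i).card:ℤ) - tgt i = d i := rfl
            have h2 : (q:ℤ) ≤ (tgt i:ℤ) := by exact_mod_cast htl i
            omega
    have hZle' : (Z0.card:ℤ) ≤ (U.card:ℤ) + (Bl.card:ℤ) := by exact_mod_cast hZle
    have hDpos : (1:ℤ) ≤ (Δ:ℤ) := by exact_mod_cast hDelta1
    have hBz : (B:ℤ) ≤ (Δ:ℤ)*((q:ℤ)+1) := by exact_mod_cast hB
    have htgtC₀ : (tgt C₀:ℤ) ≤ (q:ℤ)+1 := by exact_mod_cast htu C₀
    by_cases hq1 : 1 ≤ q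
    · have hq1' : (1:ℤ) ≤ (q:ℤ) := by exact_mod_cast hq1
      have hzc : (6:ℤ)*(Δ:ℤ) ≤ (zeroc.card:ℤ) := by
        have h1 : (k:ℤ) ≤ (zeroc.card:ℤ) + 2*(Δ:ℤ) := by exact_mod_cast hzcard
        have hk' : (k:ℤ) = 8*(Δ:ℤ) := by exact_mod_cast hk
        linarith
      have hx1 : (6:ℤ)*(Δ:ℤ)*(q:ℤ) ≤ (zeroc.card:ℤ)*(q:ℤ) :=
        mul_le_mul_of_nonneg_right hzc (by positivity)
      have hx2 : (Bl.card:ℤ) ≤ (Δ:ℤ)*(q:ℤ) + B := by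
        have h2 : ((cls g C₀).card:ℤ) ≤ (q:ℤ) := by rw [hclsC₀card]; linarith
        have h3 := mul_le_mul_of_nonneg_left h2 (show (0:ℤ) ≤ (Δ:ℤ) by linarith)
        linarith
      have hy1 : (Δ:ℤ)*((q:ℤ)+1) = (Δ:ℤ)*(q:ℤ) + Δ := by ring
      have hmq : (Δ:ℤ) ≤ (Δ:ℤ)*(q:ℤ) := le_mul_of_one_le_right (by linarith) hq1'
      linarith [hx1, hZ0card, hZle', hUle, hx2, hBz, hy1, hmq, hDpos]
    · have hqz : q = 0 := by omega
      have hqz' : (q:ℤ) = 0 := by exact_mod_cast hqz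
      rcases hq with hq' | hB0 | hN4
      · omega
      · have hC₀minus : C₀ ∈ minus := Finset.mem_filter.2 ⟨Finset.mem_univ _, hMC⟩
        have hw₁Bl : w₁ ∈ Bl :=
          Finset.mem_filter.2 ⟨Finset.mem_univ _, hminusblocked C₀ hC₀minus⟩
        have h1 : 0 < Bl.card := Finset.card_pos.2 ⟨w₁, hw₁Bl⟩
        have hcls00 : ((cls g C₀).card:ℤ) = 0 := by
          have h3 : (0:ℤ) ≤ ((cls g C₀).card:ℤ) := Nat.cast_nonneg _
          omega
        have hB0' : (B:ℤ) = 0 := by exact_mod_cast hB0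
        rw [hcls00, hB0'] at hBlcard
        have h4 : (Bl.card:ℤ) ≤ 0 := by
          calc (Bl.card:ℤ) ≤ (Δ:ℤ)*0+0 := hBlcard
            _ = 0 := by ring
        have h1' : (0:ℤ) < (Bl.card:ℤ) := by exact_mod_cast h1
        omega
      · have hN4' : (4*(Δ:ℤ)) < (Fintype.card W:ℤ) := by exact_mod_cast hN4
        have hclsplus : ∀ i ∈ plus, (cls g i).card ≤ 2 := by
          intro i hi
          have hdi : d i = 1 := (Finset.mem_filter.1 hi).2
          have e1 : ((cls g i).card:ℤ) - tgt i = d i := rfl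
          have h2 : (tgt i:ℤ) ≤ (q:ℤ)+1 := by exact_mod_cast htu i
          omega
        have hclsminus : ∀ i ∈ minus, (cls g i).card = 0 := by
          intro i hi
          have hdi : d i = -1 := (Finset.mem_filter.1 hi).2
          have e1 : ((cls g i).card:ℤ) - tgt i = d i := rfl
          have h2 : (tgt i:ℤ) ≤ (q:ℤ)+1 := by exact_mod_cast htu i
          omega
        set NZ : Finset W := univ.filter (fun v => ¬ d (g v) = 0) with hNZ
        have hNZsub : NZ ⊆ (plus ∪ minus).biUnion (cls g) := by
          intro v hv
          have h0 := (Finset.mem_filter.1 hv).2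
          rcases hall (g v) with h | h | h
          · exact Finset.mem_biUnion.2 ⟨g v, Finset.mem_union_right _
              (Finset.mem_filter.2 ⟨Finset.mem_univ _, h⟩), mem_cls.2 rfl⟩
          · exact absurd h h0
          · exact Finset.mem_biUnion.2 ⟨g v, Finset.mem_union_left _
              (Finset.mem_filter.2 ⟨Finset.mem_univ _, h⟩), mem_cls.2 rfl⟩
        have hdisjpm : Disjoint plus minus := by
          simp only [Finset.disjoint_left, hplus, hminus, Finset.mem_filter,
            Finset.mem_univ, true_and]
          intro i h1 h2
          omega
        have hNZcard : NZ.card ≤ 2*Δ := by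
          calc NZ.card ≤ ((plus ∪ minus).biUnion (cls g)).card := Finset.card_le_card hNZsub
            _ ≤ ∑ i ∈ plus ∪ minus, (cls g i).card := Finset.card_biUnion_le
            _ = ∑ i ∈ plus, (cls g i).card + ∑ i ∈ minus, (cls g i).card :=
                Finset.sum_union hdisjpm
            _ ≤ ∑ _i ∈ plus, 2 + ∑ i ∈ minus, 0 := by
                apply Nat.add_le_add
                · exact Finset.sum_le_sum hclsplus
                · exact Finset.sum_le_sum (fun i hi => le_of_eq (hclsminus i hi))
            _ ≤ 2*Δ := by
                rw [Finset.sum_const, Finset.sum_const]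
                simp only [smul_eq_mul, mul_zero, add_zero]
                omega
        have hsplitZ : Z0.card + NZ.card = Fintype.card W := by
          rw [hZ0, hNZ]
          rw [Finset.card_filter_add_card_filter_not (p := fun v => d (g v) = 0)]
          exact Finset.card_univ
        have hcls00 : ((cls g C₀).card:ℤ) = 0 := by
          have h3 : (0:ℤ) ≤ ((cls g C₀).card:ℤ) := Nat.cast_nonneg _
          omega
        rw [hcls00] at hBlcard
        have hBl' : (Bl.card:ℤ) ≤ (Δ:ℤ) := by
          calc (Bl.card:ℤ) ≤ (Δ:ℤ)*0 + B := hBlcard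
            _ = B := by ring
            _ ≤ (Δ:ℤ)*((q:ℤ)+1) := hBz
            _ = (Δ:ℤ) := by rw [hqz']; ring
        have hU' : (U.card:ℤ) ≤ (Δ:ℤ) := by
          calc (U.card:ℤ) ≤ (Δ:ℤ)*((q:ℤ)+1) := hUle
            _ = (Δ:ℤ) := by rw [hqz']; ring
        have hNZ' : (NZ.card:ℤ) ≤ 2*(Δ:ℤ) := by exact_mod_cast hNZcard
        have hsplitZ' : (Z0.card:ℤ) + (NZ.card:ℤ) = (Fintype.card W:ℤ) := by
          exact_mod_cast hsplitZ
        linarith [hZle', hBl', hU', hNZ', hsplitZ', hN4']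

end L1


section App
variable {V : Type*} [Fintype V] [DecidableEq V] (F : SimpleGraph V) [DecidableRel F.Adj]

instance instDecComap (S : Finset V) : DecidableRel (F.comap (Subtype.val : ↥S → V)).Adj :=
  fun _ _ => inferInstanceAs (Decidable (F.Adj _ _))

lemma card_subtype_filter (S : Finset V) (pred : V → Prop) [DecidablePred pred] :
    (univ.filter (fun v : ↥S => pred ↑v)).card = (S.filter pred).card := by
  apply Finset.card_bij (fun (v : ↥S) _ => (v : V))
  · intro a ha
    exact Finset.mem_filter.2 ⟨a.2, (Finset.mem_filter.1 ha).2⟩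
  · intro a _ b _ h
    exact Subtype.ext h
  · intro b hb
    exact ⟨⟨b, (Finset.mem_filter.1 hb).1⟩,
      Finset.mem_filter.2 ⟨Finset.mem_univ _, (Finset.mem_filter.1 hb).2⟩, rfl⟩

lemma comap_degree_eq (S : Finset V) (v : ↥S) :
    (F.comap (Subtype.val : ↥S → V)).degree v = (S.filter (fun u => F.Adj ↑v u)).card := by
  rw [← SimpleGraph.card_neighborFinset_eq_degree]
  apply Finset.card_bij (fun (u : ↥S) _ => (u : V))
  · intro a ha
    rw [SimpleGraph.mem_neighborFinset] at ha
    exact Finset.mem_filter.2 ⟨a.2, ha⟩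
  · intro a _ b _ h
    exact Subtype.ext h
  · intro b hb
    refine ⟨⟨b, (Finset.mem_filter.1 hb).1⟩, ?_, rfl⟩
    rw [SimpleGraph.mem_neighborFinset]
    exact (Finset.mem_filter.1 hb).2

lemma card_inter_compl (A S : Finset V) : (A ∩ S).card + (A ∩ Sᶜ).card = A.card := by
  rw [← Finset.card_union_of_disjoint, ← Finset.inter_union_distrib_left,
    Finset.union_compl, Finset.inter_univ]
  exact Finset.disjoint_left.2 (fun a ha hb =>
    (Finset.mem_compl.1 (Finset.mem_inter.1 hb).2) (Finset.mem_inter.1 ha).2)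

lemma deg_split (x : V) (S : Finset V) :
    (S.filter (fun u => F.Adj x u)).card + (Sᶜ.filter (fun u => F.Adj x u)).card = F.degree x := by
  have h1 : S.filter (fun u => F.Adj x u) = (F.neighborFinset x) ∩ S := by
    ext u
    simp [SimpleGraph.mem_neighborFinset, and_comm]
  have h2 : Sᶜ.filter (fun u => F.Adj x u) = (F.neighborFinset x) ∩ Sᶜ := by
    ext u
    simp [SimpleGraph.mem_neighborFinset, and_comm]
  rw [h1, h2, card_inter_compl, SimpleGraph.card_neighborFinset_eq_degree]

lemma card_val_lt {k : ℕ} (m : ℕ) (h : m ≤ k) :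
    (Finset.filter (fun i : Fin k => (i:ℕ) < m) univ).card = m := by
  have key : (Finset.filter (fun i : Fin k => (i:ℕ) < m) univ).card = (Finset.range m).card := by
    apply Finset.card_bij (fun (i : Fin k) _ => (i : ℕ))
    · intro a ha
      exact Finset.mem_range.2 (Finset.mem_filter.1 ha).2
    · intro a _ b _ hab
      exact Fin.ext hab
    · intro b hb
      have hbk : b < k := lt_of_lt_of_le (Finset.mem_range.1 hb) h
      exact ⟨⟨b, hbk⟩, Finset.mem_filter.2 ⟨Finset.mem_univ _, Finset.mem_range.1 hb⟩, rfl⟩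
  rw [key, Finset.card_range]

lemma tgt_comp {k p q s' r₁ r₂ r : ℕ} (hr₁k : r₁ ≤ k) (hrk : r ≤ k) (hr₂k : r₂ < k)
    (hglob : (s' = p + q ∧ r = r₁ + r₂) ∨ (s' = p + q + 1 ∧ r + k = r₁ + r₂)) (x : ℕ) :
    (p + if x < r₁ then 1 else 0) ≤ (s' + if x < r then 1 else 0) ∧
    q ≤ (s' + if x < r then 1 else 0) - (p + if x < r₁ then 1 else 0) ∧
    (s' + if x < r then 1 else 0) - (p + if x < r₁ then 1 else 0) ≤ q + 1 ∧
    (p + if x < r₁ then 1 else 0) +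
      ((s' + if x < r then 1 else 0) - (p + if x < r₁ then 1 else 0)) =
      (s' + if x < r then 1 else 0) := by
  rcases hglob with ⟨h1, h2⟩ | ⟨h1, h2⟩ <;> by_cases hb1 : x < r₁ <;> by_cases hb2 : x < r <;>
    simp only [hb1, hb2, if_true, if_false] <;> omega

theorem main_half (hDel : 1 ≤ F.maxDegree) (S : Finset V)
    (hS2 : 2 * S.card ≤ Fintype.card V) (hn : 8 * F.maxDegree < Fintype.card V) :
    ∃ f : V → Fin (8 * F.maxDegree),
      (∀ i, ∀ u v : V, f u = i → f v = i → ¬ F.Adj u v) ∧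
      (∀ i j, ((univ : Finset V).filter (fun v => f v = i)).card ≤
        ((univ : Finset V).filter (fun v => f v = j)).card + 1) ∧
      (∀ i j, (((univ : Finset V).filter (fun v => f v = i)) ∩ S).card ≤
        (((univ : Finset V).filter (fun v => f v = j)) ∩ S).card + 1) ∧
      (∀ i j, (((univ : Finset V).filter (fun v => f v = i)) ∩ Sᶜ).card ≤
        (((univ : Finset V).filter (fun v => f v = j)) ∩ Sᶜ).card + 1) := by
  classical
  set Δ := F.maxDegree with hDdef
  set k := 8 * Δ with hkdef
  set n := Fintype.card V with hndef
  set N₁ := S.card with hN₁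
  set N₂ := Sᶜ.card with hN₂
  have hcardle : S.card ≤ Fintype.card V := Finset.card_le_univ S
  have hNsum : N₁ + N₂ = n := by
    rw [hN₁, hN₂, Finset.card_compl, hndef]
    omega
  set p := N₁ / k with hp
  set r₁ := N₁ % k with hr₁
  set q := N₂ / k with hq
  set r₂ := N₂ % k with hr₂
  set s' := n / k with hs'
  set r := n % k with hr
  have hk0 : 0 < k := by omega
  have hdm1 : k * p + r₁ = N₁ := Nat.div_add_mod _ _
  have hdm2 : k * q + r₂ = N₂ := Nat.div_add_mod _ _
  have hdm3 : k * s' + r = n := Nat.div_add_mod _ _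
  have hr₁k : r₁ < k := Nat.mod_lt _ hk0
  have hr₂k : r₂ < k := Nat.mod_lt _ hk0
  have hrk : r < k := Nat.mod_lt _ hk0
  have hpq : p ≤ q := Nat.div_le_div_right (by omega)
  have hglob : (s' = p + q ∧ r = r₁ + r₂) ∨ (s' = p + q + 1 ∧ r + k = r₁ + r₂) := by
    by_cases ht : r₁ + r₂ < k
    · left
      have hneq : n = k * (p + q) + (r₁ + r₂) := by
        rw [← hNsum, ← hdm1, ← hdm2]; ring
      have h1 : n / k = (p + q) + (r₁ + r₂) / k := by
        rw [hneq]; exact Nat.mul_add_div hk0 _ _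
      have h2 : n % k = (r₁ + r₂) % k := by
        rw [hneq]; exact Nat.mul_add_mod _ _ _
      rw [Nat.div_eq_of_lt ht, Nat.add_zero] at h1
      rw [Nat.mod_eq_of_lt ht] at h2
      exact ⟨by rw [hs', h1], by rw [hr, h2]⟩
    · right
      push_neg at ht
      have htlt : r₁ + r₂ - k < k := by omega
      have hneq : n = k * (p + q + 1) + (r₁ + r₂ - k) := by
        rw [← hNsum, ← hdm1, ← hdm2]
        have : k * (p + q + 1) = k * p + k * q + k := by ring
        omega
      have h1 : n / k = (p + q + 1) + (r₁ + r₂ - k) / k := by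
        rw [hneq]; exact Nat.mul_add_div hk0 _ _
      have h2 : n % k = (r₁ + r₂ - k) % k := by
        rw [hneq]; exact Nat.mul_add_mod _ _ _
      rw [Nat.div_eq_of_lt htlt, Nat.add_zero] at h1
      rw [Nat.mod_eq_of_lt htlt] at h2
      constructor
      · rw [hs', h1]
      · rw [hr, h2]; omega
  set tgt1 : Fin k → ℕ := fun i => p + if (i:ℕ) < r₁ then 1 else 0 with htgt1
  set tgtT : Fin k → ℕ := fun i => s' + if (i:ℕ) < r then 1 else 0 with htgtT
  set tgt2 : Fin k → ℕ := fun i => tgtT i - tgt1 i with htgt2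
  have hcomp : ∀ i : Fin k, tgt1 i ≤ tgtT i ∧ q ≤ tgt2 i ∧ tgt2 i ≤ q + 1 ∧
      tgt1 i + tgt2 i = tgtT i := by
    intro i
    simp only [htgt1, htgtT, htgt2]
    exact tgt_comp (le_of_lt hr₁k) (le_of_lt hrk) hr₂k hglob (i:ℕ)
  have hsum1 : ∑ i, tgt1 i = N₁ := by
    simp only [htgt1]
    rw [Finset.sum_add_distrib, Finset.sum_const, ← Finset.card_filter,
      card_val_lt r₁ (le_of_lt hr₁k)]
    rw [Finset.card_univ, Fintype.card_fin, smul_eq_mul]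
    omega
  have hsumT : ∑ i, tgtT i = n := by
    simp only [htgtT]
    rw [Finset.sum_add_distrib, Finset.sum_const, ← Finset.card_filter,
      card_val_lt r (le_of_lt hrk)]
    rw [Finset.card_univ, Fintype.card_fin, smul_eq_mul]
    omega
  have hsum2 : ∑ i, tgt2 i = N₂ := by
    have h1 : ∑ i, (tgt1 i + tgt2 i) = ∑ i, tgtT i :=
      Finset.sum_congr rfl (fun i _ => (hcomp i).2.2.2)
    rw [Finset.sum_add_distrib, hsum1, hsumT] at h1
    omega
  -- side 1
  obtain ⟨g₁, hg₁V, hg₁card⟩ := lemma1 (F.comap (Subtype.val : ↥S → V))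
    (fun _ => (∅ : Finset (Fin k))) tgt1 (q := p) (B := 0) hDel rfl
    (by
      intro v
      simp only [Finset.card_empty, Nat.add_zero]
      rw [comap_degree_eq]
      calc (S.filter (fun u => F.Adj ↑v u)).card ≤ F.degree ↑v := by
            have := deg_split F (↑v) S
            omega
        _ ≤ Δ := F.degree_le_maxDegree _)
    (fun i => by simp only [htgt1]; omega)
    (fun i => by simp only [htgt1]; split_ifs <;> omega)
    (by rw [Fintype.card_coe]; exact hsum1)
    (fun i => by simp)
    (Nat.zero_le _)
    (Or.inr (Or.inl rfl))
  -- side 2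
  set L₂ : ↥(Sᶜ) → Finset (Fin k) :=
    fun v => univ.filter (fun i => ∃ u ∈ cls g₁ i, F.Adj ↑v ↑u) with hL₂
  have hq2 : 4 * Δ < N₂ := by omega
  obtain ⟨g₂, hg₂V, hg₂card⟩ := lemma1 (F.comap (Subtype.val : ↥(Sᶜ) → V))
    L₂ tgt2 (q := q) (B := Δ * (p+1)) hDel rfl
    (by
      intro v
      rw [comap_degree_eq]
      have hL2le : (L₂ v).card ≤ (S.filter (fun u => F.Adj ↑v u)).card := by
        rw [← card_subtype_filter S (fun u => F.Adj ↑v u)]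
        have hsub : L₂ v ⊆ (univ.filter (fun u : ↥S => F.Adj ↑v ↑u)).image (fun u => g₁ u) := by
          intro i hi
          obtain ⟨u, hu, hadj⟩ := (Finset.mem_filter.1 hi).2
          exact Finset.mem_image.2 ⟨u, Finset.mem_filter.2 ⟨Finset.mem_univ _, hadj⟩, mem_cls.1 hu⟩
        exact le_trans (Finset.card_le_card hsub) Finset.card_image_le
      have hds := deg_split F (↑v : V) S
      have hdle : F.degree ↑v ≤ Δ := F.degree_le_maxDegree _
      omega)
    (fun i => (hcomp i).2.1)
    (fun i => (hcomp i).2.2.1)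
    (by rw [Fintype.card_coe]; exact hsum2)
    (by
      intro i
      have hsub : ∀ v ∈ univ.filter (fun v : ↥(Sᶜ) => i ∈ L₂ v),
          (v:V) ∈ (cls g₁ i).biUnion (fun u => F.neighborFinset ↑u) := by
        intro v hv
        obtain ⟨u, hu, hadj⟩ := (Finset.mem_filter.1 ((Finset.mem_filter.1 hv).2)).2
        refine Finset.mem_biUnion.2 ⟨u, hu, ?_⟩
        rw [SimpleGraph.mem_neighborFinset]
        exact F.adj_symm hadj
      calc (univ.filter (fun v : ↥(Sᶜ) => i ∈ L₂ v)).card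
          ≤ ((cls g₁ i).biUnion (fun u => F.neighborFinset ↑u)).card := by
            apply Finset.card_le_card_of_injOn (fun v : ↥(Sᶜ) => (v : V)) hsub
            intro a _ b _ hab
            exact Subtype.ext hab
        _ ≤ ∑ u ∈ cls g₁ i, (F.neighborFinset (↑u : V)).card := Finset.card_biUnion_le
        _ ≤ ∑ _u ∈ cls g₁ i, Δ := Finset.sum_le_sum (fun u _ => by
            rw [SimpleGraph.card_neighborFinset_eq_degree]; exact F.degree_le_maxDegree _)
        _ = (cls g₁ i).card * Δ := by rw [Finset.sum_const, smul_eq_mul]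
        _ = tgt1 i * Δ := by rw [hg₁card i]
        _ ≤ (p+1) * Δ := Nat.mul_le_mul_right _ (by simp only [htgt1]; split_ifs <;> omega)
        _ = Δ * (p+1) := Nat.mul_comm _ _)
    (Nat.mul_le_mul_left Δ (by omega))
    (Or.inr (Or.inr (by rw [Fintype.card_coe]; exact hq2)))
  -- combine the two colorings
  set f : V → Fin k := fun v =>
    if h : v ∈ S then g₁ ⟨v, h⟩ else g₂ ⟨v, Finset.mem_compl.2 h⟩ with hf
  have hfS : ∀ (v : V) (h : v ∈ S), f v = g₁ ⟨v, h⟩ := by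
    intro v h; simp only [hf]; rw [dif_pos h]
  have hfSc : ∀ (v : V) (h : v ∉ S), f v = g₂ ⟨v, Finset.mem_compl.2 h⟩ := by
    intro v h; simp only [hf]; rw [dif_neg h]
  have hcard1 : ∀ i, ((univ.filter (fun v => f v = i)) ∩ S).card = tgt1 i := by
    intro i
    rw [← hg₁card i]
    symm
    apply Finset.card_bij (fun (u : ↥S) _ => (u : V))
    · intro a ha
      refine Finset.mem_inter.2 ⟨Finset.mem_filter.2 ⟨Finset.mem_univ _, ?_⟩, a.2⟩
      rw [hfS _ a.2]
      exact mem_cls.1 ha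
    · intro a _ b _ h
      exact Subtype.ext h
    · intro b hb
      obtain ⟨hbf, hbS⟩ := Finset.mem_inter.1 hb
      refine ⟨⟨b, hbS⟩, ?_, rfl⟩
      apply mem_cls.2
      have h2 := (Finset.mem_filter.1 hbf).2
      rw [hfS b hbS] at h2
      exact h2
  have hcard2 : ∀ i, ((univ.filter (fun v => f v = i)) ∩ Sᶜ).card = tgt2 i := by
    intro i
    rw [← hg₂card i]
    symm
    apply Finset.card_bij (fun (u : ↥(Sᶜ)) _ => (u : V))
    · intro a ha
      refine Finset.mem_inter.2 ⟨Finset.mem_filter.2 ⟨Finset.mem_univ _, ?_⟩, a.2⟩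
      rw [hfSc _ (Finset.mem_compl.1 a.2)]
      exact mem_cls.1 ha
    · intro a _ b _ h
      exact Subtype.ext h
    · intro b hb
      obtain ⟨hbf, hbS⟩ := Finset.mem_inter.1 hb
      refine ⟨⟨b, hbS⟩, ?_, rfl⟩
      apply mem_cls.2
      have h2 := (Finset.mem_filter.1 hbf).2
      rw [hfSc b (Finset.mem_compl.1 hbS)] at h2
      exact h2
  have hcardT : ∀ i, (univ.filter (fun v => f v = i)).card = tgtT i := by
    intro i
    rw [← card_inter_compl (univ.filter (fun v => f v = i)) S, hcard1, hcard2]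
    exact (hcomp i).2.2.2
  refine ⟨f, ?_, ?_, ?_, ?_⟩
  · intro i u v hu hv hadj
    by_cases hus : u ∈ S <;> by_cases hvs : v ∈ S
    · rw [hfS u hus] at hu
      rw [hfS v hvs] at hv
      exact hg₁V.1 ⟨u, hus⟩ ⟨v, hvs⟩ hadj (hu.trans hv.symm)
    · rw [hfS u hus] at hu
      rw [hfSc v hvs] at hv
      refine hg₂V.2 ⟨v, Finset.mem_compl.2 hvs⟩ ?_
      rw [hv]
      exact Finset.mem_filter.2 ⟨Finset.mem_univ _, ⟨u, hus⟩, mem_cls.2 hu, F.adj_symm hadj⟩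
    · rw [hfSc u hus] at hu
      rw [hfS v hvs] at hv
      refine hg₂V.2 ⟨u, Finset.mem_compl.2 hus⟩ ?_
      rw [hu]
      exact Finset.mem_filter.2 ⟨Finset.mem_univ _, ⟨v, hvs⟩, mem_cls.2 hv, hadj⟩
    · rw [hfSc u hus] at hu
      rw [hfSc v hvs] at hv
      exact hg₂V.1 ⟨u, Finset.mem_compl.2 hus⟩ ⟨v, Finset.mem_compl.2 hvs⟩ hadj
        (hu.trans hv.symm)
  · intro i j
    rw [hcardT i, hcardT j]
    simp only [htgtT]
    split_ifs <;> omega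
  · intro i j
    rw [hcard1 i, hcard1 j]
    simp only [htgt1]
    split_ifs <;> omega
  · intro i j
    rw [hcard2 i, hcard2 j]
    have h1 := (hcomp i).2.1
    have h2 := (hcomp i).2.2.1
    have h3 := (hcomp j).2.1
    have h4 := (hcomp j).2.2.1
    omega

end App

end EqCol

theorem stmt_10 {V : Type*} [Fintype V] [DecidableEq V] (F : SimpleGraph V)
    [DecidableRel F.Adj] (hΔ : 1 ≤ F.maxDegree) (Y : Finset V) :
    ∃ f : V → Fin (8 * F.maxDegree),
      -- each part is an independent set
      (∀ i, ∀ u v : V, f u = i → f v = i → ¬ F.Adj u v) ∧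
      -- the parts differ in size by at most one
      (∀ i j, ((univ : Finset V).filter (fun v => f v = i)).card ≤
        ((univ : Finset V).filter (fun v => f v = j)).card + 1) ∧
      -- the intersections of the parts with Y differ in size by at most one
      (∀ i j, (((univ : Finset V).filter (fun v => f v = i)) ∩ Y).card ≤
        (((univ : Finset V).filter (fun v => f v = j)) ∩ Y).card + 1) := by
  classical
  by_cases hsmall : Fintype.card V ≤ 8 * F.maxDegree
  · -- tiny case: an injection works
    let e := Fintype.equivFin V
    set f : V → Fin (8 * F.maxDegree) := fun v => Fin.castLE hsmall (e v) with hf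
    have hinj : Function.Injective f := fun a b h => e.injective (Fin.castLE_injective _ h)
    have hone : ∀ i, ((univ : Finset V).filter (fun v => f v = i)).card ≤ 1 := by
      intro i
      apply Finset.card_le_one.2
      intro a ha b hb
      exact hinj ((Finset.mem_filter.1 ha).2.trans (Finset.mem_filter.1 hb).2.symm)
    refine ⟨f, ?_, ?_, ?_⟩
    · intro i u v hu hv hadj
      exact F.irrefl (by rwa [hinj (hu.trans hv.symm)] at hadj)
    · intro i j
      have h := hone i
      omega
    · intro i j
      have hsub : ((univ : Finset V).filter (fun v => f v = i)) ∩ Y ⊆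
          (univ : Finset V).filter (fun v => f v = i) := Finset.inter_subset_left
      have h := le_trans (Finset.card_le_card hsub) (hone i)
      omega
  · push_neg at hsmall
    by_cases hY : 2 * Y.card ≤ Fintype.card V
    · obtain ⟨f, h1, h2, h3, _⟩ := EqCol.main_half F hΔ Y hY hsmall
      exact ⟨f, h1, h2, h3⟩
    · have hYc : 2 * Yᶜ.card ≤ Fintype.card V := by
        have h1 : Y.card ≤ Fintype.card V := Finset.card_le_univ Y
        have h2 : Yᶜ.card = Fintype.card V - Y.card := Finset.card_compl Y
        omega
      obtain ⟨f, h1, h2, _, h4⟩ := EqCol.main_half F hΔ Yᶜ hYc hsmall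
      refine ⟨f, h1, h2, ?_⟩
      intro i j
      have h := h4 i j
      rwa [compl_compl] at h
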